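/- Fix an integer n ≥ 2 and reals b₁ > b₂ ≥ … ≥ bₙ > 0, and let r ∈ ℝⁿ with rᵢ > 0 for all i. Set T = min(2π/b₂, 4π/b₁). Then every point τ of the open interval (2π/b₁, T) satisfies sin(bᵢτ/2) ≠ 0 for all i, and there exists exactly one τ ∈ (2π/b₁, T) such that ψ(τ, r) = 0. -/

import Mathlib

open Real Finset Set

/-- `ψ(τ, r) = Σ_{i=1}^{n} (rᵢ²/2)·(3τ − bᵢτ²·cos(bᵢτ/2)/sin(bᵢτ/2) − sin(bᵢτ)/bᵢ)`. -/
noncomputable def psiSum (n : ℕ) (b r : ℕ → ℝ) (τ : ℝ) : ℝ :=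
  ∑ i ∈ Finset.Icc 1 n, (r i) ^ 2 / 2 *
    (3 * τ - b i * τ ^ 2 * Real.cos (b i * τ / 2) / Real.sin (b i * τ / 2) -
      Real.sin (b i * τ) / b i)

open Filter Topology in
private lemma auxDivAtBot {f g : ℝ → ℝ} {l : Filter ℝ} {c : ℝ} (hc : c < 0)
    (hf : Tendsto f l (𝓝 c)) (hg : Tendsto g l (𝓝[>] 0)) :
    Tendsto (fun x => f x / g x) l atBot := by
  simpa [div_eq_mul_inv] using hf.neg_mul_atTop hc hg.inv_tendsto_nhdsGT_zero

open Filter Topology in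
private lemma auxDivAtBot' {f g : ℝ → ℝ} {l : Filter ℝ} {c : ℝ} (hc : 0 < c)
    (hf : Tendsto f l (𝓝 c)) (hg0 : Tendsto g l (𝓝 0)) (hgneg : ∀ᶠ x in l, g x < 0) :
    Tendsto (fun x => f x / g x) l atBot := by
  have hng : Tendsto (fun x => -g x) l (𝓝[>] 0) := by
    rw [tendsto_nhdsWithin_iff]
    exact ⟨by simpa using hg0.neg, hgneg.mono fun x hx => by simpa using hx⟩
  have h := auxDivAtBot (c := -c) (by linarith) hf.neg hng
  simpa [neg_div_neg_eq] using h

open Filter Topology in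
private lemma auxDivAtTop {f g : ℝ → ℝ} {l : Filter ℝ} {c : ℝ} (hc : c < 0)
    (hf : Tendsto f l (𝓝 c)) (hg0 : Tendsto g l (𝓝 0)) (hgneg : ∀ᶠ x in l, g x < 0) :
    Tendsto (fun x => f x / g x) l atTop := by
  have h := auxDivAtBot' (c := -c) (by linarith) hf.neg hg0 hgneg
  have h2 := tendsto_neg_atBot_atTop.comp h
  simpa [Function.comp_def, neg_div] using h2

noncomputable def termF (bb rr : ℝ) (τ : ℝ) : ℝ :=
  rr ^ 2 / 2 * (3 * τ - bb * τ ^ 2 * Real.cos (bb * τ / 2) / Real.sin (bb * τ / 2) -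
    Real.sin (bb * τ) / bb)

open Filter Topology in
private lemma sumTendstoAtTop {s : Finset ℕ} {f : ℕ → ℝ → ℝ} {l : Filter ℝ}
    (h : ∀ i ∈ s, Tendsto (f i) l atTop ∨ ∃ L, Tendsto (f i) l (𝓝 L))
    (i₀ : ℕ) (hi₀s : i₀ ∈ s) (hi₀ : Tendsto (f i₀) l atTop) :
    Tendsto (fun x => ∑ i ∈ s, f i x) l atTop := by
  have hlow : ∀ j, ∃ c : ℝ, j ∈ s.erase i₀ → ∀ᶠ x in l, c ≤ f j x := by
    intro j
    by_cases hj : j ∈ s.erase i₀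
    · rcases h j (Finset.mem_of_mem_erase hj) with h1 | ⟨L, hL⟩
      · exact ⟨0, fun _ => h1.eventually (eventually_ge_atTop 0)⟩
      · exact ⟨L - 1, fun _ => hL.eventually (eventually_ge_nhds (by linarith))⟩
    · exact ⟨0, fun hh => absurd hh hj⟩
  choose c hc using hlow
  have hev : ∀ᶠ x in l, ∀ j ∈ s.erase i₀, c j ≤ f j x :=
    (Filter.eventually_all_finset _).2 fun j hj => hc j hj
  have key : Tendsto (fun x => f i₀ x + ∑ j ∈ s.erase i₀, c j) l atTop :=
    tendsto_atTop_add_const_right l _ hi₀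
  apply tendsto_atTop_mono' l ?_ key
  filter_upwards [hev] with x hx
  rw [← Finset.add_sum_erase _ _ hi₀s]
  exact add_le_add le_rfl (Finset.sum_le_sum hx)

open Filter Topology in
private lemma sumTendstoAtBot {s : Finset ℕ} {f : ℕ → ℝ → ℝ} {l : Filter ℝ}
    (h : ∀ i ∈ s, Tendsto (f i) l atBot ∨ ∃ L, Tendsto (f i) l (𝓝 L))
    (i₀ : ℕ) (hi₀s : i₀ ∈ s) (hi₀ : Tendsto (f i₀) l atBot) :
    Tendsto (fun x => ∑ i ∈ s, f i x) l atBot := by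
  have h' : ∀ i ∈ s, Tendsto (fun x => -f i x) l atTop ∨ ∃ L, Tendsto (fun x => -f i x) l (𝓝 L) := by
    intro i hi
    rcases h i hi with h1 | ⟨L, hL⟩
    · exact Or.inl (by simpa [Function.comp_def] using tendsto_neg_atBot_atTop.comp h1)
    · exact Or.inr ⟨-L, hL.neg⟩
  have hi₀' : Tendsto (fun x => -f i₀ x) l atTop := by
    simpa [Function.comp_def] using tendsto_neg_atBot_atTop.comp hi₀
  have := sumTendstoAtTop h' i₀ hi₀s hi₀'
  have h2 : Tendsto (fun x => -∑ i ∈ s, f i x) l atTop := by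
    simpa [Finset.sum_neg_distrib] using this
  have h3 := tendsto_neg_atTop_atBot.comp h2
  simpa [Function.comp_def] using h3

private lemma termF_hasDerivAt (bb rr : ℝ) (hb : bb ≠ 0) {τ : ℝ}
    (hs : Real.sin (bb * τ / 2) ≠ 0) :
    ∃ E : ℝ, 0 < E ∧ HasDerivAt (termF bb rr) (rr ^ 2 / 2 * E) τ := by
  have hx : HasDerivAt (fun t : ℝ => bb * t / 2) (bb / 2) τ := by
    simpa using ((hasDerivAt_id τ).const_mul bb).div_const 2
  have hcos : HasDerivAt (fun t : ℝ => Real.cos (bb * t / 2))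
      (-Real.sin (bb * τ / 2) * (bb / 2)) τ := (Real.hasDerivAt_cos _).comp τ hx
  have hsin : HasDerivAt (fun t : ℝ => Real.sin (bb * t / 2))
      (Real.cos (bb * τ / 2) * (bb / 2)) τ := (Real.hasDerivAt_sin _).comp τ hx
  have hsq : HasDerivAt (fun t : ℝ => bb * t ^ 2) (bb * (2 * τ)) τ := by
    simpa using (hasDerivAt_pow 2 τ).const_mul bb
  have hnum := hsq.mul hcos
  have hq := hnum.div hsin hs
  have hbt : HasDerivAt (fun t : ℝ => Real.sin (bb * t)) (Real.cos (bb * τ) * bb) τ :=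
    (Real.hasDerivAt_sin _).comp τ (by simpa using (hasDerivAt_id τ).const_mul bb)
  have hlin : HasDerivAt (fun t : ℝ => 3 * t) 3 τ := by
    simpa using (hasDerivAt_id τ).const_mul (3 : ℝ)
  have hφ := ((hlin.sub hq).sub (hbt.div_const bb)).const_mul (rr ^ 2 / 2)
  set s := Real.sin (bb * τ / 2) with hsdef
  set c := Real.cos (bb * τ / 2) with hcdef
  set E : ℝ := 3 - ((bb * (2 * τ) * c + bb * τ ^ 2 * (-s * (bb / 2))) * s -
      bb * τ ^ 2 * c * (c * (bb / 2))) / s ^ 2 - Real.cos (bb * τ) * bb / bb with hEdef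
  refine ⟨E, ?_, ?_⟩
  · have hpy : s ^ 2 + c ^ 2 = 1 := Real.sin_sq_add_cos_sq _
    have hc2 : Real.cos (bb * τ) = 1 - 2 * s ^ 2 := by
      have h2 : bb * τ = 2 * (bb * τ / 2) := by ring
      rw [h2, Real.cos_two_mul]
      simp only [← hcdef]
      linarith
    have hs2 : 0 < s ^ 2 := lt_of_le_of_ne (sq_nonneg s) (Ne.symm (pow_ne_zero 2 hs))
    have e1 : E = 3 - ((bb * (2 * τ) * c + bb * τ ^ 2 * (-s * (bb / 2))) * s -
        bb * τ ^ 2 * c * (c * (bb / 2))) / s ^ 2 - (1 - 2 * s ^ 2) := by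
      rw [hEdef, hc2]
      field_simp
    have hNs : ((bb * (2 * τ) * c + bb * τ ^ 2 * (-s * (bb / 2))) * s -
        bb * τ ^ 2 * c * (c * (bb / 2))) / s ^ 2 * s ^ 2 = ((bb * (2 * τ) * c + bb * τ ^ 2 * (-s * (bb / 2))) * s -
        bb * τ ^ 2 * c * (c * (bb / 2))) := div_mul_cancel₀ _ (pow_ne_zero 2 hs)
    have key : E * s ^ 2 = 2 * (bb * τ / 2 - c * s) ^ 2 + 4 * s ^ 4 := by
      calc E * s ^ 2 = 3 * s ^ 2 - ((bb * (2 * τ) * c + bb * τ ^ 2 * (-s * (bb / 2))) * s -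
              bb * τ ^ 2 * c * (c * (bb / 2))) / s ^ 2 * s ^ 2 - (1 - 2 * s ^ 2) * s ^ 2 := by
            rw [e1]; ring
        _ = 3 * s ^ 2 - ((bb * (2 * τ) * c + bb * τ ^ 2 * (-s * (bb / 2))) * s -
              bb * τ ^ 2 * c * (c * (bb / 2))) - (1 - 2 * s ^ 2) * s ^ 2 := by rw [hNs]
        _ = 2 * (bb * τ / 2 - c * s) ^ 2 + 4 * s ^ 4 := by
            linear_combination (bb ^ 2 * τ ^ 2 / 2 - 2 * s ^ 2) * hpy
    have h4 : 0 < s ^ 4 := by positivity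
    have hEs : 0 < E * s ^ 2 := by
      rw [key]; nlinarith [sq_nonneg (bb * τ / 2 - c * s), h4]
    rcases mul_pos_iff.mp hEs with ⟨h, _⟩ | ⟨_, h⟩
    · exact h
    · linarith
  · exact hφ

private lemma termF_continuousAt {bb rr t : ℝ} (hb : bb ≠ 0)
    (hs : Real.sin (bb * t / 2) ≠ 0) : ContinuousAt (termF bb rr) t := by
  obtain ⟨E, _, hD⟩ := termF_hasDerivAt bb rr hb hs
  exact hD.continuousAt

open Filter Topology in
private lemma tendsto_cos_half (bb t0 : ℝ) {l : Filter ℝ} (hl : l ≤ 𝓝 t0) :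
    Tendsto (fun τ => Real.cos (bb * τ / 2)) l (𝓝 (Real.cos (bb * t0 / 2))) :=
  ((Real.continuous_cos.comp ((continuous_const.mul continuous_id).div_const 2)).tendsto t0).mono_left hl

open Filter Topology in
private lemma tendsto_sin_half (bb t0 : ℝ) {l : Filter ℝ} (hl : l ≤ 𝓝 t0) :
    Tendsto (fun τ => Real.sin (bb * τ / 2)) l (𝓝 (Real.sin (bb * t0 / 2))) :=
  ((Real.continuous_sin.comp ((continuous_const.mul continuous_id).div_const 2)).tendsto t0).mono_left hl

open Filter Topology in
private lemma termF_tendsto_atTop {bb rr t0 : ℝ} {l : Filter ℝ} (hl : l ≤ 𝓝 t0)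
    (hb : 0 < bb) (ht : 0 < t0) (hr : rr ≠ 0)
    (hq : Tendsto (fun τ => Real.cos (bb * τ / 2) / Real.sin (bb * τ / 2)) l atBot) :
    Tendsto (termF bb rr) l atTop := by
  have h1 : Tendsto (fun τ : ℝ => bb * τ ^ 2) l (𝓝 (bb * t0 ^ 2)) :=
    ((continuous_const.mul (continuous_pow 2)).tendsto t0).mono_left hl
  have h2 : Tendsto (fun τ => bb * τ ^ 2 * (Real.cos (bb * τ / 2) / Real.sin (bb * τ / 2)))
      l atBot := Filter.Tendsto.pos_mul_atBot (by positivity) h1 hq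
  have h3 : Tendsto (fun τ : ℝ => 3 * τ - Real.sin (bb * τ) / bb) l
      (𝓝 (3 * t0 - Real.sin (bb * t0) / bb)) :=
    (((continuous_const.mul continuous_id).sub
      ((Real.continuous_sin.comp (continuous_const.mul continuous_id)).div_const bb)).tendsto t0).mono_left hl
  have h4 : Tendsto (fun τ => -(bb * τ ^ 2 * (Real.cos (bb * τ / 2) / Real.sin (bb * τ / 2))))
      l atTop := by
    have := tendsto_neg_atBot_atTop.comp h2
    simpa [Function.comp_def] using this
  have h5 : Tendsto (fun τ => (3 * τ - Real.sin (bb * τ) / bb) +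
      -(bb * τ ^ 2 * (Real.cos (bb * τ / 2) / Real.sin (bb * τ / 2)))) l atTop := h3.add_atTop h4
  have h6 := h5.const_mul_atTop (r := rr ^ 2 / 2) (by positivity)
  have heq : (fun τ => rr ^ 2 / 2 * ((3 * τ - Real.sin (bb * τ) / bb) +
      -(bb * τ ^ 2 * (Real.cos (bb * τ / 2) / Real.sin (bb * τ / 2))))) = termF bb rr := by
    funext τ; unfold termF; ring
  rwa [heq] at h6

open Filter Topology in
private lemma termF_tendsto_atBot {bb rr t0 : ℝ} {l : Filter ℝ} (hl : l ≤ 𝓝 t0)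
    (hb : 0 < bb) (ht : 0 < t0) (hr : rr ≠ 0)
    (hq : Tendsto (fun τ => Real.cos (bb * τ / 2) / Real.sin (bb * τ / 2)) l atTop) :
    Tendsto (termF bb rr) l atBot := by
  have h1 : Tendsto (fun τ : ℝ => bb * τ ^ 2) l (𝓝 (bb * t0 ^ 2)) :=
    ((continuous_const.mul (continuous_pow 2)).tendsto t0).mono_left hl
  have h2 : Tendsto (fun τ => bb * τ ^ 2 * (Real.cos (bb * τ / 2) / Real.sin (bb * τ / 2)))
      l atTop := Filter.Tendsto.pos_mul_atTop (by positivity) h1 hq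
  have h3 : Tendsto (fun τ : ℝ => 3 * τ - Real.sin (bb * τ) / bb) l
      (𝓝 (3 * t0 - Real.sin (bb * t0) / bb)) :=
    (((continuous_const.mul continuous_id).sub
      ((Real.continuous_sin.comp (continuous_const.mul continuous_id)).div_const bb)).tendsto t0).mono_left hl
  have h4 : Tendsto (fun τ => -(bb * τ ^ 2 * (Real.cos (bb * τ / 2) / Real.sin (bb * τ / 2))))
      l atBot := by
    have := tendsto_neg_atTop_atBot.comp h2
    simpa [Function.comp_def] using this
  have h5 : Tendsto (fun τ => (3 * τ - Real.sin (bb * τ) / bb) +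
      -(bb * τ ^ 2 * (Real.cos (bb * τ / 2) / Real.sin (bb * τ / 2)))) l atBot := h3.add_atBot h4
  have h6 := h5.const_mul_atBot (r := rr ^ 2 / 2) (by positivity)
  have heq : (fun τ => rr ^ 2 / 2 * ((3 * τ - Real.sin (bb * τ) / bb) +
      -(bb * τ ^ 2 * (Real.cos (bb * τ / 2) / Real.sin (bb * τ / 2))))) = termF bb rr := by
    funext τ; unfold termF; ring
  rwa [heq] at h6

private lemma eq_pi_of_sin_eq_zero {x : ℝ} (h0 : 0 < x) (hπ : x ≤ Real.pi)
    (hs : Real.sin x = 0) : x = Real.pi := by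
  rcases eq_or_lt_of_le hπ with h | h
  · exact h
  · exfalso
    have := (Real.sin_eq_zero_iff_of_lt_of_lt (by linarith [Real.pi_pos]) h).mp hs
    linarith

open Filter Topology in
/-- Fix `n ≥ 2` and reals `b₁ > b₂ ≥ … ≥ bₙ > 0`, and `r ∈ ℝⁿ` with
`rᵢ > 0` for all `i`. Set `T = min(2π/b₂, 4π/b₁)`. Then every `τ ∈ (2π/b₁, T)`
satisfies `sin(bᵢτ/2) ≠ 0` for all `i`, and there is exactly one `τ ∈ (2π/b₁, T)`
with `ψ(τ, r) = 0`. -/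
theorem statement8 (n : ℕ) (hn : 2 ≤ n) (b : ℕ → ℝ)
    (hpos : ∀ i ∈ Finset.Icc 1 n, 0 < b i)
    (h12 : b 2 < b 1)
    (hanti : ∀ i j, 2 ≤ i → i ≤ j → j ≤ n → b j ≤ b i)
    (r : ℕ → ℝ) (hr : ∀ i ∈ Finset.Icc 1 n, 0 < r i) :
    (∀ τ ∈ Set.Ioo (2 * Real.pi / b 1) (min (2 * Real.pi / b 2) (4 * Real.pi / b 1)),
      ∀ i ∈ Finset.Icc 1 n, Real.sin (b i * τ / 2) ≠ 0) ∧
    (∃! τ : ℝ,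
      τ ∈ Set.Ioo (2 * Real.pi / b 1) (min (2 * Real.pi / b 2) (4 * Real.pi / b 1)) ∧
      psiSum n b r τ = 0) := by
  have hπ := Real.pi_pos
  have h1n : 1 ∈ Finset.Icc 1 n := by simp; omega
  have h2n : 2 ∈ Finset.Icc 1 n := by simp [hn]
  have hb1 : 0 < b 1 := hpos 1 h1n
  have hb2 : 0 < b 2 := hpos 2 h2n
  set a := 2 * Real.pi / b 1 with ha
  set T := min (2 * Real.pi / b 2) (4 * Real.pi / b 1) with hT
  have hapos : 0 < a := by positivity
  have hT1 : T ≤ 2 * Real.pi / b 2 := min_le_left _ _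
  have hT2 : T ≤ 4 * Real.pi / b 1 := min_le_right _ _
  have haT : a < T := by
    apply lt_min
    · exact div_lt_div_of_pos_left (by positivity) hb2 h12
    · rw [ha, div_lt_div_iff₀ hb1 hb1]
      nlinarith
  have hTpos : 0 < T := hapos.trans haT
  have hb_le : ∀ i, 2 ≤ i → i ≤ n → b i ≤ b 2 := fun i h2i hin => hanti 2 i le_rfl h2i hin
  have hx1 : ∀ τ ∈ Set.Ioo a T, Real.pi < b 1 * τ / 2 ∧ b 1 * τ / 2 < 2 * Real.pi := by
    intro τ hτ
    constructor
    · have := (div_lt_iff₀ hb1).mp hτ.1; linarith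
    · have hτT : τ < 4 * Real.pi / b 1 := lt_of_lt_of_le hτ.2 hT2
      have := (lt_div_iff₀ hb1).mp hτT; linarith
  have hxi : ∀ i, 2 ≤ i → i ≤ n → ∀ τ ∈ Set.Ioo a T,
      0 < b i * τ / 2 ∧ b i * τ / 2 < Real.pi := by
    intro i h2i hin τ hτ
    have hbi : 0 < b i := hpos i (Finset.mem_Icc.mpr ⟨by omega, hin⟩)
    have hτ0 : 0 < τ := hapos.trans hτ.1
    constructor
    · positivity
    · have h1 : b i * τ ≤ b 2 * τ := mul_le_mul_of_nonneg_right (hb_le i h2i hin) hτ0.le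
      have h2 : τ < 2 * Real.pi / b 2 := lt_of_lt_of_le hτ.2 hT1
      have := (lt_div_iff₀ hb2).mp h2
      linarith
  have hsin1 : ∀ τ ∈ Set.Ioo a T, Real.sin (b 1 * τ / 2) < 0 := by
    intro τ hτ
    obtain ⟨hlo, hhi⟩ := hx1 τ hτ
    have h := Real.sin_pos_of_pos_of_lt_pi (x := b 1 * τ / 2 - Real.pi)
      (by linarith) (by linarith)
    rw [Real.sin_sub_pi] at h
    linarith
  have hsin2 : ∀ i, 2 ≤ i → i ≤ n → ∀ τ ∈ Set.Ioo a T, 0 < Real.sin (b i * τ / 2) := by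
    intro i h2i hin τ hτ
    obtain ⟨hlo, hhi⟩ := hxi i h2i hin τ hτ
    exact Real.sin_pos_of_pos_of_lt_pi hlo hhi
  have hne : ∀ τ ∈ Set.Ioo a T, ∀ i ∈ Finset.Icc 1 n, Real.sin (b i * τ / 2) ≠ 0 := by
    intro τ hτ i hi
    obtain ⟨h1i, hin⟩ := Finset.mem_Icc.mp hi
    rcases eq_or_lt_of_le h1i with h | h
    · rw [← h]; exact (hsin1 τ hτ).ne
    · exact (hsin2 i h hin τ hτ).ne'
  refine ⟨hne, ?_⟩
  -- derivative and strict monotonicity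
  have hderiv : ∀ τ ∈ Set.Ioo a T, ∃ D, 0 < D ∧ HasDerivAt (psiSum n b r) D τ := by
    intro τ hτ
    have h := fun i (hi : i ∈ Finset.Icc 1 n) =>
      termF_hasDerivAt (b i) (r i) (hpos i hi).ne' (hne τ hτ i hi)
    choose! E hEpos hED using h
    refine ⟨∑ i ∈ Finset.Icc 1 n, r i ^ 2 / 2 * E i, ?_, ?_⟩
    · apply Finset.sum_pos ?_ ⟨1, h1n⟩
      intro i hi
      exact mul_pos (by have := hr i hi; positivity) (hEpos i hi)
    · exact HasDerivAt.fun_sum hED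
  have hcont : ContinuousOn (psiSum n b r) (Set.Ioo a T) := by
    intro τ hτ
    obtain ⟨D, _, hD⟩ := hderiv τ hτ
    exact hD.continuousAt.continuousWithinAt
  have hmono : StrictMonoOn (psiSum n b r) (Set.Ioo a T) := by
    apply strictMonoOn_of_deriv_pos (convex_Ioo a T) hcont
    intro x hx
    rw [interior_Ioo] at hx
    obtain ⟨D, hDpos, hD⟩ := hderiv x hx
    rwa [hD.deriv]
  have hIool : Set.Ioo a T ∈ 𝓝[>] a := Ioo_mem_nhdsGT haT
  have hIoor : Set.Ioo a T ∈ 𝓝[<] T := Ioo_mem_nhdsLT haT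
  have hx1a : b 1 * a / 2 = Real.pi := by
    rw [ha]; field_simp
  -- ψ → -∞ at a⁺
  have hbot1 : Tendsto (termF (b 1) (r 1)) (𝓝[>] a) atBot := by
    have hcos : Tendsto (fun τ => Real.cos (b 1 * τ / 2)) (𝓝[>] a) (𝓝 (-1)) := by
      have := tendsto_cos_half (b 1) a (l := 𝓝[>] a) nhdsWithin_le_nhds
      rwa [hx1a, Real.cos_pi] at this
    have hsin0 : Tendsto (fun τ => Real.sin (b 1 * τ / 2)) (𝓝[>] a) (𝓝 0) := by
      have := tendsto_sin_half (b 1) a (l := 𝓝[>] a) nhdsWithin_le_nhds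
      rwa [hx1a, Real.sin_pi] at this
    have hsneg : ∀ᶠ τ in 𝓝[>] a, Real.sin (b 1 * τ / 2) < 0 :=
      Filter.eventually_of_mem hIool fun τ hτ => hsin1 τ hτ
    exact termF_tendsto_atBot nhdsWithin_le_nhds hb1 hapos (hr 1 h1n).ne'
      (auxDivAtTop (by norm_num) hcos hsin0 hsneg)
  have hbot : Tendsto (psiSum n b r) (𝓝[>] a) atBot := by
    have hdich : ∀ i ∈ Finset.Icc 1 n,
        Tendsto (termF (b i) (r i)) (𝓝[>] a) atBot ∨
        ∃ L, Tendsto (termF (b i) (r i)) (𝓝[>] a) (𝓝 L) := by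
      intro i hi
      obtain ⟨h1i, hin⟩ := Finset.mem_Icc.mp hi
      rcases eq_or_lt_of_le h1i with h | h2i
      · left; rw [← h]; exact hbot1
      · right
        have hbi := hpos i hi
        have hxa : b i * a / 2 = Real.pi * (b i / b 1) := by
          rw [ha]; field_simp
        have hbib1 : b i < b 1 := lt_of_le_of_lt (hb_le i h2i hin) h12
        have hlt : b i * a / 2 < Real.pi := by
          rw [hxa]
          have := mul_lt_mul_of_pos_left ((div_lt_one hb1).mpr hbib1) hπ
          simpa using this
        have hsne : Real.sin (b i * a / 2) ≠ 0 :=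
          (Real.sin_pos_of_pos_of_lt_pi (by positivity) hlt).ne'
        exact ⟨_, ((termF_continuousAt hbi.ne' hsne).tendsto).mono_left nhdsWithin_le_nhds⟩
    exact sumTendstoAtBot hdich 1 h1n hbot1
  -- ψ → +∞ at T⁻
  have hblow : ∀ i ∈ Finset.Icc 1 n, Real.sin (b i * T / 2) = 0 →
      Tendsto (termF (b i) (r i)) (𝓝[<] T) atTop := by
    intro i hi hs0
    obtain ⟨h1i, hin⟩ := Finset.mem_Icc.mp hi
    have hbi := hpos i hi
    have hsin0 : Tendsto (fun τ => Real.sin (b i * τ / 2)) (𝓝[<] T) (𝓝 0) := by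
      have := tendsto_sin_half (b i) T (l := 𝓝[<] T) nhdsWithin_le_nhds
      rwa [hs0] at this
    rcases eq_or_lt_of_le h1i with h | h2i
    · rw [← h] at hs0 hsin0 hbi ⊢
      have hlo : Real.pi < b 1 * T / 2 := by nlinarith [hx1a]
      have hhi : b 1 * T / 2 ≤ 2 * Real.pi := by
        have := (le_div_iff₀ hb1).mp hT2
        linarith
      have hx2 : b 1 * T / 2 = 2 * Real.pi := by
        have h0 : Real.sin (b 1 * T / 2 - Real.pi) = 0 := by
          rw [Real.sin_sub_pi, hs0, neg_zero]
        have := eq_pi_of_sin_eq_zero (by linarith) (by linarith) h0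
        linarith
      have hcos : Tendsto (fun τ => Real.cos (b 1 * τ / 2)) (𝓝[<] T) (𝓝 1) := by
        have := tendsto_cos_half (b 1) T (l := 𝓝[<] T) nhdsWithin_le_nhds
        rwa [hx2, Real.cos_two_pi] at this
      have hsneg : ∀ᶠ τ in 𝓝[<] T, Real.sin (b 1 * τ / 2) < 0 :=
        Filter.eventually_of_mem hIoor fun τ hτ => hsin1 τ hτ
      exact termF_tendsto_atTop nhdsWithin_le_nhds hb1 hTpos (hr 1 h1n).ne'
        (auxDivAtBot' one_pos hcos hsin0 hsneg)
    · have hlo : 0 < b i * T / 2 := by positivity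
      have hhi : b i * T / 2 ≤ Real.pi := by
        have h1 : b i * T ≤ b 2 * T := mul_le_mul_of_nonneg_right (hb_le i h2i hin) hTpos.le
        have h2 : T * b 2 ≤ 2 * Real.pi := (le_div_iff₀ hb2).mp hT1
        linarith
      have hx2 : b i * T / 2 = Real.pi := eq_pi_of_sin_eq_zero hlo hhi hs0
      have hcos : Tendsto (fun τ => Real.cos (b i * τ / 2)) (𝓝[<] T) (𝓝 (-1)) := by
        have := tendsto_cos_half (b i) T (l := 𝓝[<] T) nhdsWithin_le_nhds
        rwa [hx2, Real.cos_pi] at this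
      have hspos : ∀ᶠ τ in 𝓝[<] T, 0 < Real.sin (b i * τ / 2) :=
        Filter.eventually_of_mem hIoor fun τ hτ => hsin2 i h2i hin τ hτ
      have hsin' : Tendsto (fun τ => Real.sin (b i * τ / 2)) (𝓝[<] T) (𝓝[>] 0) :=
        tendsto_nhdsWithin_iff.mpr ⟨hsin0, hspos⟩
      exact termF_tendsto_atTop nhdsWithin_le_nhds hbi hTpos (hr i hi).ne'
        (auxDivAtBot (by norm_num) hcos hsin')
  have htop : Tendsto (psiSum n b r) (𝓝[<] T) atTop := by
    have hdich : ∀ i ∈ Finset.Icc 1 n,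
        Tendsto (termF (b i) (r i)) (𝓝[<] T) atTop ∨
        ∃ L, Tendsto (termF (b i) (r i)) (𝓝[<] T) (𝓝 L) := by
      intro i hi
      by_cases hs0 : Real.sin (b i * T / 2) = 0
      · exact Or.inl (hblow i hi hs0)
      · exact Or.inr ⟨_, ((termF_continuousAt (hpos i hi).ne' hs0).tendsto).mono_left
          nhdsWithin_le_nhds⟩
    rcases le_total (2 * Real.pi / b 2) (4 * Real.pi / b 1) with hmin | hmin
    · have hTeq : T = 2 * Real.pi / b 2 := min_eq_left hmin
      have hs0 : Real.sin (b 2 * T / 2) = 0 := by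
        have hh : b 2 * T / 2 = Real.pi := by rw [hTeq]; field_simp
        rw [hh, Real.sin_pi]
      exact sumTendstoAtTop hdich 2 h2n (hblow 2 h2n hs0)
    · have hTeq : T = 4 * Real.pi / b 1 := min_eq_right hmin
      have hs0 : Real.sin (b 1 * T / 2) = 0 := by
        have hh : b 1 * T / 2 = 2 * Real.pi := by rw [hTeq]; field_simp; ring
        rw [hh, Real.sin_two_pi]
      exact sumTendstoAtTop hdich 1 h1n (hblow 1 h1n hs0)
  -- existence of sign change
  have hexneg : ∃ τ₁ ∈ Set.Ioo a T, psiSum n b r τ₁ < 0 := by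
    have h1 : ∀ᶠ τ in 𝓝[>] a, psiSum n b r τ < 0 := hbot.eventually (eventually_lt_atBot 0)
    have h2 : ∀ᶠ τ in 𝓝[>] a, τ ∈ Set.Ioo a T := Filter.eventually_of_mem hIool fun _ hx => hx
    obtain ⟨τ₁, hτ₁, hτ₁'⟩ := (h1.and h2).exists
    exact ⟨τ₁, hτ₁', hτ₁⟩
  have hexpos : ∃ τ₂ ∈ Set.Ioo a T, 0 < psiSum n b r τ₂ := by
    have h1 : ∀ᶠ τ in 𝓝[<] T, 0 < psiSum n b r τ := htop.eventually (eventually_gt_atTop 0)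
    have h2 : ∀ᶠ τ in 𝓝[<] T, τ ∈ Set.Ioo a T := Filter.eventually_of_mem hIoor fun _ hx => hx
    obtain ⟨τ₂, hτ₂, hτ₂'⟩ := (h1.and h2).exists
    exact ⟨τ₂, hτ₂', hτ₂⟩
  obtain ⟨τ₁, hτ₁mem, hτ₁neg⟩ := hexneg
  obtain ⟨τ₂, hτ₂mem, hτ₂pos⟩ := hexpos
  have hτ12 : τ₁ < τ₂ := by
    by_contra hle
    push_neg at hle
    have := hmono.monotoneOn hτ₂mem hτ₁mem hle
    linarith
  have hsub : Set.Icc τ₁ τ₂ ⊆ Set.Ioo a T := fun x hx =>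
    ⟨lt_of_lt_of_le hτ₁mem.1 hx.1, lt_of_le_of_lt hx.2 hτ₂mem.2⟩
  obtain ⟨τ₀, hτ₀mem, hτ₀⟩ := intermediate_value_Icc hτ12.le (hcont.mono hsub)
    ⟨hτ₁neg.le, hτ₂pos.le⟩
  refine ⟨τ₀, ⟨hsub hτ₀mem, hτ₀⟩, ?_⟩
  rintro y ⟨hy, hy0⟩
  exact hmono.injOn hy (hsub hτ₀mem) (by rw [hy0, hτ₀])
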